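/- Let X be a Hilbert space over 𝕜 (𝕜 = ℝ or ℂ) and let A, B : X → X be bounded surjective linear operators. Then there exists a bounded surjective linear operator T : X → X with A = T ∘ B if and only if ker B ⊆ ker A. -/

import Mathlib

theorem stmt6 (𝕜 X : Type*) [RCLike 𝕜] [NormedAddCommGroup X]
    [InnerProductSpace 𝕜 X] [CompleteSpace X]
    (A B : X →L[𝕜] X) (hA : Function.Surjective A) (hB : Function.Surjective B) :
    (∃ T : X →L[𝕜] X, Function.Surjective T ∧ A = T.comp B) ↔
      LinearMap.ker (B : X →ₗ[𝕜] X) ≤ LinearMap.ker (A : X →ₗ[𝕜] X) := by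
  constructor
  · rintro ⟨T, -, rfl⟩ x hx
    simp only [LinearMap.mem_ker, ContinuousLinearMap.coe_coe] at hx ⊢
    simp [hx]
  · intro hker
    set K : Submodule 𝕜 X := LinearMap.ker (B : X →ₗ[𝕜] X) with hK
    have hKclosed : IsClosed (K : Set X) := ContinuousLinearMap.isClosed_ker B
    haveI : CompleteSpace K := hKclosed.completeSpace_coe
    haveI : CompleteSpace (Kᗮ : Submodule 𝕜 X) :=
      K.isClosed_orthogonal.completeSpace_coe
    have hcompl : IsCompl K Kᗮ := K.isCompl_orthogonal
    -- B restricted to Kᗮ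
    set B' : (Kᗮ : Submodule 𝕜 X) →L[𝕜] X := B.comp Kᗮ.subtypeL with hB'
    have hinj : LinearMap.ker (B' : (Kᗮ : Submodule 𝕜 X) →ₗ[𝕜] X) = ⊥ := by
      rw [Submodule.eq_bot_iff]
      rintro ⟨x, hx⟩ hx0
      have hxK : x ∈ K := by
        simpa [B', hK] using hx0
      have : x ∈ K ⊓ Kᗮ := ⟨hxK, hx⟩
      rw [hcompl.inf_eq_bot] at this
      simpa using this
    have hsurj : LinearMap.range (B' : (Kᗮ : Submodule 𝕜 X) →ₗ[𝕜] X) = ⊤ := by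
      rw [LinearMap.range_eq_top]
      intro y
      obtain ⟨x, hx⟩ := hB y
      -- decompose x = k + p with k ∈ K, p ∈ Kᗮ
      have hx2 : x ∈ K ⊔ Kᗮ := by rw [hcompl.sup_eq_top]; trivial
      obtain ⟨k, hk, p, hp, hx'⟩ := Submodule.mem_sup.mp hx2
      refine ⟨⟨p, hp⟩, ?_⟩
      have hBk : B k = 0 := hk
      calc B' ⟨p, hp⟩ = B p := rfl
        _ = B (k + p) := by simp [map_add, hBk]
        _ = y := by rw [hx']; exact hx
    let e : (Kᗮ : Submodule 𝕜 X) ≃L[𝕜] X :=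
      ContinuousLinearEquiv.ofBijective B' hinj hsurj
    refine ⟨A.comp (Kᗮ.subtypeL.comp (e.symm : X →L[𝕜] (Kᗮ : Submodule 𝕜 X))), ?_, ?_⟩
    case refine_2 =>
      ext x
      simp only [ContinuousLinearMap.comp_apply, ContinuousLinearMap.coe_coe]
      have hBe : B ((e.symm (B x) : (Kᗮ : Submodule 𝕜 X)) : X) = B x := by
        exact e.apply_symm_apply (B x)
      have hmem : x - ((e.symm (B x) : (Kᗮ : Submodule 𝕜 X)) : X) ∈ K := by
        simp [hK, LinearMap.mem_ker, map_sub, hBe]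
      have := hker hmem
      rw [LinearMap.mem_ker, map_sub, sub_eq_zero] at this
      exact this.symm ▸ rfl
    case refine_1 =>
      intro y
      obtain ⟨x, hx⟩ := hA y
      exact ⟨B x, by
        have hBe : B ((e.symm (B x) : (Kᗮ : Submodule 𝕜 X)) : X) = B x := by
          exact e.apply_symm_apply (B x)
        have hmem : x - ((e.symm (B x) : (Kᗮ : Submodule 𝕜 X)) : X) ∈ K := by
          simp [hK, LinearMap.mem_ker, map_sub, hBe]
        have h2 := hker hmem
        rw [LinearMap.mem_ker, map_sub, sub_eq_zero] at h2
        simpa [ContinuousLinearMap.comp_apply] using h2.symm.trans hx⟩
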